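/- For every integer k ≥ 1, r_k(x) = −Σ_{k'=0}^{k−1} Σ_{l=0}^{k−k'−1} (C(k, l+k'+1) · l!/(l+k'+1)!) (−1)^{l} x^{k'}. -/

import Mathlib

open Polynomial Finset

namespace RExplicitAux

/-- The summand scalar. -/
def tt (k kp l : ℕ) : ℚ :=
  (k.choose (l + kp + 1) : ℚ) * (l.factorial : ℚ) / ((l + kp + 1).factorial : ℚ) * (-1 : ℚ) ^ l

/-- Coefficient of `X^kp`. -/
def A (k kp : ℕ) : ℚ := ∑ l ∈ Finset.range (k - kp), tt k kp l

noncomputable def S (k : ℕ) : Polynomial ℚ := ∑ kp ∈ Finset.range k, C (A k kp) * X ^ kp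

lemma tt_zero {k kp l : ℕ} (h : k < l + kp + 1) : tt k kp l = 0 := by
  simp [tt, Nat.choose_eq_zero_of_lt h]

lemma choose_id (m j : ℕ) :
    (m+2) * Nat.choose (m+2) (j+1) + (m+1) * Nat.choose m (j+1)
      = (2*m+3) * Nat.choose (m+1) (j+1) + (j+1) * Nat.choose (m+1) j := by
  have h1 : Nat.choose (m+2) (j+1) = Nat.choose (m+1) j + Nat.choose (m+1) (j+1) :=
    Nat.choose_succ_succ _ _
  have h2 : Nat.choose (m+1) (j+1) = Nat.choose m j + Nat.choose m (j+1) :=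
    Nat.choose_succ_succ _ _
  have h3 : Nat.choose m j * (m+1) = Nat.choose (m+1) j * (m + 1 - j) :=
    Nat.choose_mul_succ_eq m j
  rcases le_or_gt j (m+1) with hj | hj
  · have : m + 1 - j + j = m + 1 := Nat.sub_add_cancel hj
    nlinarith [this, h1, h2, h3]
  · have hz1 : Nat.choose m j = 0 := Nat.choose_eq_zero_of_lt (by omega)
    have hz2 : Nat.choose (m+1) j = 0 := Nat.choose_eq_zero_of_lt (by omega)
    have hz3 : Nat.choose m (j+1) = 0 := Nat.choose_eq_zero_of_lt (by omega)
    have hz4 : Nat.choose (m+1) (j+1) = 0 := Nat.choose_eq_zero_of_lt (by omega)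
    have hz5 : Nat.choose (m+2) (j+1) = 0 := Nat.choose_eq_zero_of_lt (by omega)
    simp [hz1, hz2, hz3, hz4, hz5]

lemma tt_I (m n l : ℕ) :
    ((m:ℚ)+2) * tt (m+2) (n+1) l + ((m:ℚ)+1) * tt m (n+1) l
      = (2*(m:ℚ)+3) * tt (m+1) (n+1) l + tt (m+1) n l := by
  have key := choose_id m (l + n + 1)
  have keyQ : ((m:ℚ)+2) * ((m+2).choose (l+n+2) : ℚ) + ((m:ℚ)+1) * (m.choose (l+n+2) : ℚ)
      = (2*(m:ℚ)+3) * ((m+1).choose (l+n+2) : ℚ) + ((l:ℚ)+n+2) * ((m+1).choose (l+n+1) : ℚ) := by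
    exact_mod_cast congrArg (Nat.cast : ℕ → ℚ) key
  have hf : ((l + n + 2).factorial : ℚ) = ((l:ℚ) + n + 2) * ((l + n + 1).factorial : ℚ) := by
    push_cast [show l + n + 2 = (l + n + 1) + 1 from rfl, Nat.factorial_succ]
    ring
  have h1 : ((l + n + 1).factorial : ℚ) ≠ 0 := by exact_mod_cast (l+n+1).factorial_ne_zero
  have h2 : ((l:ℚ) + n + 2) ≠ 0 := by positivity
  set f : ℚ := (l.factorial : ℚ) / ((l + n + 2).factorial : ℚ) * (-1)^l with hfdef
  have e1 : tt (m+2) (n+1) l = ((m+2).choose (l+n+2) : ℚ) * f := by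
    rw [tt, show l+(n+1)+1 = l+n+2 from by omega, hfdef]; ring
  have e2 : tt m (n+1) l = (m.choose (l+n+2) : ℚ) * f := by
    rw [tt, show l+(n+1)+1 = l+n+2 from by omega, hfdef]; ring
  have e3 : tt (m+1) (n+1) l = ((m+1).choose (l+n+2) : ℚ) * f := by
    rw [tt, show l+(n+1)+1 = l+n+2 from by omega, hfdef]; ring
  have e4 : tt (m+1) n l = ((l:ℚ)+n+2) * ((m+1).choose (l+n+1) : ℚ) * f := by
    rw [tt, hfdef, hf]
    field_simp
  rw [e1, e2, e3, e4]
  linear_combination f * keyQ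
lemma A_zero {k kp : ℕ} (h : k ≤ kp) : A k kp = 0 := by
  simp [A, Nat.sub_eq_zero_of_le h]

lemma A_extend (k kp N : ℕ) (h : k - kp ≤ N) :
    A k kp = ∑ l ∈ Finset.range N, tt k kp l := by
  rw [A, Finset.sum_subset (Finset.range_subset_range.2 h)]
  intro l hl hnl
  simp only [Finset.mem_range] at hl hnl
  exact tt_zero (by omega)

lemma A_I (m n : ℕ) :
    ((m:ℚ)+2) * A (m+2) (n+1) + ((m:ℚ)+1) * A m (n+1)
      = (2*(m:ℚ)+3) * A (m+1) (n+1) + A (m+1) n := by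
  rw [A_extend (m+2) (n+1) (m+1-n) (by omega), A_extend m (n+1) (m+1-n) (by omega),
    A_extend (m+1) (n+1) (m+1-n) (by omega), A_extend (m+1) n (m+1-n) (by omega)]
  rw [Finset.mul_sum, Finset.mul_sum, Finset.mul_sum, ← Finset.sum_add_distrib,
    ← Finset.sum_add_distrib]
  exact Finset.sum_congr rfl fun l _ => tt_I m n l

lemma alt_sum (m : ℕ) : ∑ l ∈ Finset.range (m+2), (-1 : ℚ)^l * ((m+1).choose l : ℚ) = 0 := by
  have h : ∑ i ∈ Finset.range (m+2), (-1:ℤ)^i * ((m+1).choose i : ℤ) = 0 :=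
    Int.alternating_sum_range_choose_of_ne (n := m+1) (by omega)
  exact_mod_cast h
lemma tt_II (m l : ℕ) :
    ((m:ℚ)+2) * tt (m+2) 0 l + ((m:ℚ)+1) * tt m 0 l
      = (2*(m:ℚ)+3) * tt (m+1) 0 l + (-1:ℚ)^l * ((m+1).choose l : ℚ) := by
  have key := choose_id m l
  have keyQ : ((m:ℚ)+2) * ((m+2).choose (l+1) : ℚ) + ((m:ℚ)+1) * (m.choose (l+1) : ℚ)
      = (2*(m:ℚ)+3) * ((m+1).choose (l+1) : ℚ) + ((l:ℚ)+1) * ((m+1).choose l : ℚ) := by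
    exact_mod_cast congrArg (Nat.cast : ℕ → ℚ) key
  have hf : ((l + 1).factorial : ℚ) = ((l:ℚ) + 1) * (l.factorial : ℚ) := by
    push_cast [Nat.factorial_succ]; ring
  have h1 : ((l).factorial : ℚ) ≠ 0 := by exact_mod_cast l.factorial_ne_zero
  have h2 : ((l:ℚ) + 1) ≠ 0 := by positivity
  set f : ℚ := (l.factorial : ℚ) / ((l + 1).factorial : ℚ) * (-1)^l with hfdef
  have e1 : tt (m+2) 0 l = ((m+2).choose (l+1) : ℚ) * f := by
    rw [tt, show l+0+1 = l+1 from by omega, hfdef]; ring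
  have e2 : tt m 0 l = (m.choose (l+1) : ℚ) * f := by
    rw [tt, show l+0+1 = l+1 from by omega, hfdef]; ring
  have e3 : tt (m+1) 0 l = ((m+1).choose (l+1) : ℚ) * f := by
    rw [tt, show l+0+1 = l+1 from by omega, hfdef]; ring
  have e4 : (-1:ℚ)^l * ((m+1).choose l : ℚ) = ((l:ℚ)+1) * ((m+1).choose l : ℚ) * f := by
    rw [hfdef, hf]
    field_simp
  rw [e1, e2, e3, e4]
  linear_combination f * keyQ
lemma A_II (m : ℕ) :
    ((m:ℚ)+2) * A (m+2) 0 + ((m:ℚ)+1) * A m 0 = (2*(m:ℚ)+3) * A (m+1) 0 := by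
  rw [A_extend (m+2) 0 (m+2) (by omega), A_extend m 0 (m+2) (by omega),
    A_extend (m+1) 0 (m+2) (by omega)]
  rw [Finset.mul_sum, Finset.mul_sum, Finset.mul_sum, ← Finset.sum_add_distrib]
  have : ∀ l ∈ Finset.range (m+2),
      ((m:ℚ)+2) * tt (m+2) 0 l + ((m:ℚ)+1) * tt m 0 l
        = (2*(m:ℚ)+3) * tt (m+1) 0 l + (-1:ℚ)^l * ((m+1).choose l : ℚ) :=
    fun l _ => tt_II m l
  rw [Finset.sum_congr rfl this, Finset.sum_add_distrib, alt_sum, add_zero]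

lemma coeff_S (k n : ℕ) : (S k).coeff n = A k n := by
  rw [S, Polynomial.finset_sum_coeff]
  simp only [Polynomial.coeff_C_mul, Polynomial.coeff_X_pow, mul_ite, mul_one, mul_zero]
  rw [Finset.sum_ite_eq (Finset.range k) n (fun kp => A k kp)]
  split
  · rfl
  · next h => exact (A_zero (by simpa [Finset.mem_range, not_lt] using h)).symm

lemma key (m : ℕ) :
    C ((m:ℚ)+2) * S (m+2) + C ((m:ℚ)+1) * S m
      = C (2*(m:ℚ)+3) * S (m+1) + X * S (m+1) := by
  ext n
  simp only [Polynomial.coeff_add, Polynomial.coeff_C_mul, coeff_S]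
  cases n with
  | zero =>
    rw [Polynomial.mul_coeff_zero, Polynomial.coeff_X_zero, zero_mul, add_zero]
    exact A_II m
  | succ n =>
    rw [Polynomial.coeff_X_mul, coeff_S]
    exact A_I m n

lemma S_one : S 1 = 1 := by
  simp [S, A, tt]

lemma S_eq (k : ℕ) :
    S k = ∑ k' ∈ Finset.range k, ∑ l ∈ Finset.range (k - k'),
        C ((k.choose (l + k' + 1) : ℚ) * (l.factorial : ℚ)
            / ((l + k' + 1).factorial : ℚ) * (-1 : ℚ) ^ l) * X ^ k' := by
  refine Finset.sum_congr rfl fun kp _ => ?_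
  rw [A, map_sum, Finset.sum_mul]
  exact Finset.sum_congr rfl fun l _ => by rw [tt]

end RExplicitAux

open RExplicitAux in
/-- With `r₀ = 0`, `r₁ = -1` and
`rₖ = ((2k-1+x)/k) r_{k-1} - ((k-1)/k) r_{k-2}` for `k ≥ 2`:
`rₖ(x) = -∑_{k'=0}^{k-1} ∑_{l=0}^{k-k'-1} (C(k,l+k'+1)·l!/(l+k'+1)!) (-1)^l x^{k'}`
for every `k ≥ 1`. -/
theorem r_explicit
    (r : ℕ → Polynomial ℚ)
    (hr0 : r 0 = 0) (hr1 : r 1 = -1)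
    (hr : ∀ k : ℕ, 2 ≤ k →
      r k = C (1 / (k : ℚ)) * (C (2 * (k : ℚ) - 1) + X) * r (k - 1)
              - C (((k : ℚ) - 1) / (k : ℚ)) * r (k - 2)) :
    ∀ k : ℕ, 1 ≤ k →
      r k = -∑ k' ∈ Finset.range k, ∑ l ∈ Finset.range (k - k'),
              C ((k.choose (l + k' + 1) : ℚ) * (l.factorial : ℚ)
                  / ((l + k' + 1).factorial : ℚ) * (-1 : ℚ) ^ l) * X ^ k' := by
  have aux : ∀ k : ℕ, r k = -S k := by
    intro k
    induction k using Nat.strong_induction_on with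
    | _ k ih =>
      match k with
      | 0 => simp [hr0, S]
      | 1 => rw [hr1, S_one]
      | (m+2) =>
        have h2 : ((m:ℚ)+2) ≠ 0 := by positivity
        have hC : (C ((m:ℚ)+2) : Polynomial ℚ) ≠ 0 := by
          simpa using (Polynomial.C_ne_zero.mpr h2)
        rw [hr (m+2) (by omega)]
        simp only [show m + 2 - 1 = m + 1 from rfl, show m + 2 - 2 = m from rfl]
        rw [ih (m+1) (by omega), ih m (by omega)]
        have hk := key m
        apply mul_left_cancel₀ hC
        have hc1 : ((m+2:ℕ):ℚ) = (m:ℚ)+2 := by push_cast; ring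
        rw [hc1]
        rw [show C ((m:ℚ)+2) * (C (1 / ((m:ℚ)+2)) * (C (2 * ((m:ℚ)+2) - 1) + X) * (-S (m+1))
              - C ((((m:ℚ)+2) - 1) / ((m:ℚ)+2)) * (-S m))
            = (C ((m:ℚ)+2) * C (1 / ((m:ℚ)+2))) * ((C (2 * ((m:ℚ)+2) - 1) + X) * (-S (m+1)))
              - (C ((m:ℚ)+2) * C ((((m:ℚ)+2) - 1) / ((m:ℚ)+2))) * (-S m) from by ring]
        rw [← Polynomial.C_mul, ← Polynomial.C_mul,
          show ((m:ℚ)+2) * (1 / ((m:ℚ)+2)) = 1 from by field_simp,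
          show ((m:ℚ)+2) * ((((m:ℚ)+2) - 1) / ((m:ℚ)+2)) = (m:ℚ)+1 from by field_simp; ring,
          Polynomial.C_1,
          show (2 * ((m:ℚ)+2) - 1) = 2*(m:ℚ)+3 from by ring]
        linear_combination hk
  intro k hk
  rw [aux k, S_eq]
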